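/- Let ξ ~ N(π, σ²) with σ > 0 and define τ̂(ξ) = (1/σ)·(1 − Φ(ξ/σ))/φ(ξ/σ). Then for every ε > 0 and every π ∈ ℝ, E[τ̂(ξ)^{1+ε}] = +∞. -/

import Mathlib

open MeasureTheory ProbabilityTheory Filter
open scoped ENNReal NNReal

/-- Standard normal density `φ`. -/
noncomputable def stdPDF (x : ℝ) : ℝ :=
  (Real.sqrt (2 * Real.pi))⁻¹ * Real.exp (-(x ^ 2) / 2)

/-- Standard normal CDF `Φ`. -/
noncomputable def stdCDF (x : ℝ) : ℝ := ∫ t in Set.Iic x, stdPDF t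

/-- Mills-ratio estimator `τ̂(x, σ²) = (1/σ)(1 − Φ(x/σ))/φ(x/σ)`. -/
noncomputable def millsTau (σ x : ℝ) : ℝ :=
  (1 / σ) * (1 - stdCDF (x / σ)) / stdPDF (x / σ)

lemma stdPDF_eq : stdPDF = gaussianPDFReal 0 1 := by
  ext x
  simp [stdPDF, gaussianPDFReal, neg_div]

lemma stdPDF_pos (x : ℝ) : 0 < stdPDF x := by
  rw [stdPDF]; positivity

lemma integrable_stdPDF : MeasureTheory.Integrable stdPDF := by
  rw [stdPDF_eq]; exact integrable_gaussianPDFReal 0 1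

lemma stdCDF_zero : stdCDF 0 = 1 / 2 := by
  have htot : (∫ x, stdPDF x) = 1 := by
    rw [stdPDF_eq]; exact integral_gaussianPDFReal_eq_one 0 one_ne_zero
  have heven : ∀ x : ℝ, stdPDF (-x) = stdPDF x := by
    intro x; simp [stdPDF]
  have h1 : (∫ x in Set.Iic (0:ℝ), stdPDF x) = ∫ x in Set.Ioi (0:ℝ), stdPDF x := by
    rw [show Set.Ioi (0:ℝ) = Set.Ioi (-0 : ℝ) by norm_num, ← integral_comp_neg_Iic]
    simp [heven]
  have h2 : (∫ x in Set.Iic (0:ℝ), stdPDF x) + ∫ x in Set.Ioi (0:ℝ), stdPDF x = 1 := by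
    rw [intervalIntegral.integral_Iic_add_Ioi integrable_stdPDF.integrableOn
      integrable_stdPDF.integrableOn]
    exact htot
  rw [stdCDF]
  linarith
  
lemma stdCDF_le_half {z : ℝ} (hz : z ≤ 0) : stdCDF z ≤ 1 / 2 := by
  rw [← stdCDF_zero, stdCDF, stdCDF]
  apply setIntegral_mono_set integrable_stdPDF.integrableOn
  · exact Filter.Eventually.of_forall fun x => (stdPDF_pos x).le
  · exact Filter.Eventually.of_forall (Set.Iic_subset_Iic.mpr hz)

lemma millsTau_lb {σ : ℝ} (hσ : 0 < σ) {x : ℝ} (hx : x ≤ 0) :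
    Real.sqrt (2 * Real.pi) / (2 * σ) * Real.exp (x ^ 2 / (2 * σ ^ 2)) ≤ millsTau σ x := by
  have hzσ : x / σ ≤ 0 := div_nonpos_of_nonpos_of_nonneg hx hσ.le
  have hΦ : stdCDF (x / σ) ≤ 1 / 2 := stdCDF_le_half hzσ
  have hpdf : stdPDF (x / σ) = (Real.sqrt (2 * Real.pi))⁻¹ * Real.exp (-(x ^ 2 / σ ^ 2) / 2) := by
    rw [stdPDF, div_pow]
  rw [millsTau, hpdf]
  rw [le_div_iff₀ (by positivity)]
  have hexp : Real.exp (x ^ 2 / (2 * σ ^ 2)) * Real.exp (-(x ^ 2 / σ ^ 2) / 2) = 1 := by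
    rw [← Real.exp_add, ← Real.exp_zero]
    congr 1
    field_simp
    ring
  have hsq : (0:ℝ) < Real.sqrt (2 * Real.pi) := Real.sqrt_pos.mpr (by positivity)
  calc Real.sqrt (2 * Real.pi) / (2 * σ) * Real.exp (x ^ 2 / (2 * σ ^ 2)) *
        ((Real.sqrt (2 * Real.pi))⁻¹ * Real.exp (-(x ^ 2 / σ ^ 2) / 2))
      = (Real.sqrt (2 * Real.pi) * (Real.sqrt (2 * Real.pi))⁻¹) *
          (Real.exp (x ^ 2 / (2 * σ ^ 2)) * Real.exp (-(x ^ 2 / σ ^ 2) / 2)) * (2 * σ)⁻¹ := by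
        ring
    _ = 1 / σ * (1 / 2) := by
        rw [mul_inv_cancel₀ hsq.ne', hexp, mul_inv]
        ring
    _ ≤ 1 / σ * (1 - stdCDF (x / σ)) := by
        apply mul_le_mul_of_nonneg_left (by linarith) (by positivity)

/-- If ξ ~ N(π, σ²) with σ > 0, then E[τ̂(ξ)^{1+ε}] = ∞ for every ε > 0 and every π. -/
theorem stmt1 (π σ : ℝ) (hσ : 0 < σ) (ε : ℝ) (hε : 0 < ε) :
    ∫⁻ x, ENNReal.ofReal (millsTau σ x ^ (1 + ε)) ∂(gaussianReal π ⟨σ ^ 2, sq_nonneg σ⟩)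
      = ⊤ := by
  set v : NNReal := ⟨σ ^ 2, sq_nonneg σ⟩ with hv_def
  have hv : v ≠ 0 := by
    intro h
    have : σ ^ 2 = 0 := congrArg NNReal.toReal h
    exact (pow_ne_zero 2 hσ.ne') this
  rw [gaussianReal_of_var_ne_zero π hv,
    lintegral_withDensity_eq_lintegral_mul_non_measurable _ (measurable_gaussianPDF π v)
      (Filter.Eventually.of_forall fun x => ENNReal.ofReal_lt_top)]
  simp only [Pi.mul_apply]
  -- constants
  set C : ℝ := (Real.sqrt (2 * Real.pi) / (2 * σ)) ^ (1 + ε) * (σ * Real.sqrt (2 * Real.pi))⁻¹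
    with hC_def
  have hsq : (0:ℝ) < Real.sqrt (2 * Real.pi) := Real.sqrt_pos.mpr (by positivity)
  have hC : 0 < C := by
    apply mul_pos (Real.rpow_pos_of_pos (by positivity) _) (by positivity)
  -- the exponent
  set g : ℝ → ℝ := fun x => (x * (ε * x + 2 * π) - π ^ 2) / (2 * σ ^ 2) with hg_def
  have hten : Tendsto (fun x => C * Real.exp (g x)) atBot atTop := by
    apply Tendsto.const_mul_atTop hC
    apply Real.tendsto_exp_atTop.comp
    apply Tendsto.atTop_div_const (by positivity)
    apply tendsto_atTop_add_const_right
    exact tendsto_id.atBot_mul_atBot₀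
      (tendsto_atBot_add_const_right _ _ ((tendsto_const_mul_atBot_of_pos hε).mpr tendsto_id))
  obtain ⟨A, hA⟩ := Filter.eventually_atBot.mp (hten.eventually_ge_atTop 1)
  set A' : ℝ := min A 0 with hA'_def
  -- key pointwise bound
  have key : ∀ x ≤ A', (1:ℝ≥0∞) ≤ gaussianPDF π v x * ENNReal.ofReal (millsTau σ x ^ (1 + ε)) := by
    intro x hx
    have hx0 : x ≤ 0 := hx.trans (min_le_right _ _)
    have hxA : x ≤ A := hx.trans (min_le_left _ _)
    have hlb := millsTau_lb hσ hx0
    set L : ℝ := Real.sqrt (2 * Real.pi) / (2 * σ) * Real.exp (x ^ 2 / (2 * σ ^ 2)) with hL_def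
    have hL0 : 0 < L := by positivity
    have hrpow : L ^ (1 + ε) ≤ millsTau σ x ^ (1 + ε) :=
      Real.rpow_le_rpow hL0.le hlb (by positivity)
    have hLrw : L ^ (1 + ε) = (Real.sqrt (2 * Real.pi) / (2 * σ)) ^ (1 + ε) *
        Real.exp (x ^ 2 / (2 * σ ^ 2) * (1 + ε)) := by
      rw [hL_def, Real.mul_rpow (by positivity) (Real.exp_pos _).le, Real.exp_mul]
    -- gaussian pdf value
    have hpdf : gaussianPDFReal π v x
        = (σ * Real.sqrt (2 * Real.pi))⁻¹ * Real.exp (-(x - π) ^ 2 / (2 * σ ^ 2)) := by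
      rw [gaussianPDFReal]
      congr 1
      rw [show (2 * Real.pi * (v : ℝ)) = σ ^ 2 * (2 * Real.pi) by
        show 2 * Real.pi * σ ^ 2 = _; ring]
      rw [Real.sqrt_mul (sq_nonneg σ), Real.sqrt_sq hσ.le]
    have hprod : C * Real.exp (g x) ≤ gaussianPDFReal π v x * millsTau σ x ^ (1 + ε) := by
      have h1 : C * Real.exp (g x) = gaussianPDFReal π v x * L ^ (1 + ε) := by
        have hE : Real.exp (g x) = Real.exp (x ^ 2 / (2 * σ ^ 2) * (1 + ε)) *
            Real.exp (-(x - π) ^ 2 / (2 * σ ^ 2)) := by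
          rw [← Real.exp_add]
          congr 1
          rw [hg_def]
          field_simp
          ring
        rw [hpdf, hLrw, hC_def, hE]
        ring
      rw [h1]
      exact mul_le_mul_of_nonneg_left hrpow (gaussianPDFReal_nonneg π v x)
    have h1le : (1:ℝ) ≤ gaussianPDFReal π v x * millsTau σ x ^ (1 + ε) :=
      le_trans (hA x hxA) hprod
    rw [gaussianPDF, ← ENNReal.ofReal_mul (gaussianPDFReal_nonneg π v x), ← ENNReal.ofReal_one]
    exact ENNReal.ofReal_le_ofReal h1le
  -- conclude
  rw [eq_top_iff]
  calc (⊤:ℝ≥0∞) = ∫⁻ x, (Set.Iic A').indicator (fun _ => 1) x := by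
        rw [lintegral_indicator measurableSet_Iic]
        simp
    _ ≤ ∫⁻ x, gaussianPDF π v x * ENNReal.ofReal (millsTau σ x ^ (1 + ε)) := by
        apply lintegral_mono
        intro x
        by_cases hx : x ∈ Set.Iic A'
        · rw [Set.indicator_of_mem hx]
          exact key x hx
        · rw [Set.indicator_of_notMem hx]
          exact zero_le'
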